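/- Let F, G ∈ k[X,Y] with det Jac(F,G) ∈ k*, and let (𝒰(t),𝒱(t)) ∈ k[X,Y][[t]]² be the unique solution of F(𝒰,𝒱)=tX+(1-t)F, G(𝒰,𝒱)=tY+(1-t)G, 𝒰(0)=X, 𝒱(0)=Y. For each n ≥ 1, the coefficients uₙ, vₙ of tⁿ in 𝒰, 𝒱 are determined recursively: D₁·(uₙ, vₙ)ᵀ equals an expression depending only on F, G and the coefficients u₁,...,uₙ₋₁, v₁,...,vₙ₋₁, where D₁ = Jac(F,G) is invertible over k[X,Y]. In particular, each coefficient of 𝒰 and 𝒱 is a polynomial, i.e., lies in k[X,Y]. -/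

import Mathlib

open MvPolynomial


lemma expand_coeff_mul {R : Type*} [CommRing R] (m : ℕ) (P W : PowerSeries R) :
    PowerSeries.coeff (m+1) (P * W) =
      ∑ i ∈ Finset.range m, PowerSeries.coeff (i+1) P * PowerSeries.coeff (m-i) W
      + PowerSeries.coeff 0 P * PowerSeries.coeff (m+1) W
      + PowerSeries.coeff (m+1) P * PowerSeries.coeff 0 W := by
  rw [PowerSeries.coeff_mul, Finset.Nat.sum_antidiagonal_eq_sum_range_succ_mk,
    Finset.sum_range_succ, Finset.sum_range_succ']
  simp only [Nat.sub_zero, Nat.sub_self, Nat.succ_sub_succ_eq_sub]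

lemma mul_step {R : Type*} [CommRing R] (m : ℕ) (P Q W C' : PowerSeries R) (dP dW : R)
    (h1 : ∀ j < m + 1, PowerSeries.coeff j P = PowerSeries.coeff j Q)
    (h2 : PowerSeries.coeff (m+1) P = PowerSeries.coeff (m+1) Q + dP)
    (h3 : ∀ j < m + 1, PowerSeries.coeff j W = PowerSeries.coeff j C')
    (h4 : PowerSeries.coeff (m+1) W = PowerSeries.coeff (m+1) C' + dW) :
    (∀ j < m + 1, PowerSeries.coeff j (P * W) = PowerSeries.coeff j (Q * C')) ∧
    PowerSeries.coeff (m+1) (P * W) = PowerSeries.coeff (m+1) (Q * C')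
      + dP * PowerSeries.constantCoeff C' + PowerSeries.constantCoeff Q * dW := by
  constructor
  · intro j hj
    rw [PowerSeries.coeff_mul, PowerSeries.coeff_mul]
    refine Finset.sum_congr rfl fun x hx => ?_
    replace hx : x.1 + x.2 = j := by simpa using hx
    rw [h1 x.1 (lt_of_le_of_lt (hx ▸ Nat.le_add_right _ _) hj),
        h3 x.2 (lt_of_le_of_lt (hx ▸ Nat.le_add_left _ _) hj)]
  · rw [expand_coeff_mul, expand_coeff_mul]
    have hmid : ∀ i ∈ Finset.range m,
        PowerSeries.coeff (i+1) P * PowerSeries.coeff (m-i) W =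
        PowerSeries.coeff (i+1) Q * PowerSeries.coeff (m-i) C' := by
      intro i hi
      rw [Finset.mem_range] at hi
      rw [h1 (i+1) (by omega), h3 (m-i) (by omega)]
    rw [Finset.sum_congr rfl hmid, h2, h4, h3 0 (by omega), h1 0 (by omega),
      ← PowerSeries.coeff_zero_eq_constantCoeff_apply,
      ← PowerSeries.coeff_zero_eq_constantCoeff_apply]
    ring


lemma taylor_coeff {k R : Type*} [CommSemiring k] [CommRing R] [Algebra k R]
    (m : ℕ) (U V A B : PowerSeries R)
    (hU : ∀ j < m + 1, PowerSeries.coeff j U = PowerSeries.coeff j A)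
    (hV : ∀ j < m + 1, PowerSeries.coeff j V = PowerSeries.coeff j B)
    (p : MvPolynomial (Fin 2) k) :
    (∀ j < m + 1, PowerSeries.coeff j (aeval ![U,V] p) = PowerSeries.coeff j (aeval ![A,B] p)) ∧
    PowerSeries.coeff (m+1) (aeval ![U,V] p) =
      PowerSeries.coeff (m+1) (aeval ![A,B] p)
      + PowerSeries.constantCoeff (aeval ![A,B] (pderiv 0 p)) *
          (PowerSeries.coeff (m+1) U - PowerSeries.coeff (m+1) A)
      + PowerSeries.constantCoeff (aeval ![A,B] (pderiv 1 p)) *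
          (PowerSeries.coeff (m+1) V - PowerSeries.coeff (m+1) B) := by
  induction p using MvPolynomial.induction_on with
  | C a => simp
  | add p q hp hq =>
    constructor
    · intro j hj; simp [map_add, hp.1 j hj, hq.1 j hj]
    · simp only [map_add, hp.2, hq.2]; ring
  | mul_X p i hp =>
    have hmul : ∀ (W C' : PowerSeries R) (dW : R),
        (∀ j < m + 1, PowerSeries.coeff j W = PowerSeries.coeff j C') →
        PowerSeries.coeff (m+1) W = PowerSeries.coeff (m+1) C' + dW →
        (∀ j < m + 1, PowerSeries.coeff j (aeval ![U,V] p * W) =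
            PowerSeries.coeff j (aeval ![A,B] p * C')) ∧
        PowerSeries.coeff (m+1) (aeval ![U,V] p * W) =
          PowerSeries.coeff (m+1) (aeval ![A,B] p * C')
          + (PowerSeries.constantCoeff (aeval ![A,B] (pderiv 0 p)) *
              (PowerSeries.coeff (m+1) U - PowerSeries.coeff (m+1) A)
            + PowerSeries.constantCoeff (aeval ![A,B] (pderiv 1 p)) *
              (PowerSeries.coeff (m+1) V - PowerSeries.coeff (m+1) B))
            * PowerSeries.constantCoeff C'
          + PowerSeries.constantCoeff (aeval ![A,B] p) * dW := by
      intro W C' dW h3 h4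
      exact mul_step m _ _ W C' _ dW hp.1 (by rw [hp.2]; ring) h3 h4
    fin_cases i <;> simp only [Fin.zero_eta, Fin.mk_one, Fin.isValue]
    · have h := hmul U A (PowerSeries.coeff (m+1) U - PowerSeries.coeff (m+1) A)
        hU (by ring)
      simp only [map_mul, aeval_X, Matrix.cons_val_zero]
      refine ⟨h.1, ?_⟩
      rw [h.2]
      simp only [pderiv_mul, pderiv_X_self, pderiv_X_of_ne (by decide : (0:Fin 2) ≠ 1),
        map_add, map_mul, aeval_X, Matrix.cons_val_zero, mul_one, mul_zero, add_zero,
        map_mul, map_add, mul_one]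
      rw [← PowerSeries.coeff_zero_eq_constantCoeff_apply (φ := A),
        ← hU 0 (by omega), PowerSeries.coeff_zero_eq_constantCoeff_apply]
      ring
    · have h := hmul V B (PowerSeries.coeff (m+1) V - PowerSeries.coeff (m+1) B)
        hV (by ring)
      simp only [map_mul, aeval_X, Matrix.cons_val_one, Matrix.head_cons, Matrix.cons_val_zero]
      refine ⟨h.1, ?_⟩
      rw [h.2]
      simp only [pderiv_mul, pderiv_X_self, pderiv_X_of_ne (by decide : (1:Fin 2) ≠ 0),
        map_add, map_mul, aeval_X, Matrix.cons_val_one, Matrix.head_cons, Matrix.cons_val_zero, mul_one,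
        mul_zero, add_zero, map_add, mul_one]
      rw [← PowerSeries.coeff_zero_eq_constantCoeff_apply (φ := B),
        ← hV 0 (by omega), PowerSeries.coeff_zero_eq_constantCoeff_apply]
      ring

open MvPolynomial in
lemma const_aeval {k R : Type*} [CommSemiring k] [CommRing R] [Algebra k R]
    (A B : PowerSeries R) (q : MvPolynomial (Fin 2) k) :
    PowerSeries.constantCoeff (aeval ![A,B] q) =
      aeval ![PowerSeries.constantCoeff A, PowerSeries.constantCoeff B] q := by
  induction q using MvPolynomial.induction_on with
  | C a => simp [algebraMap_eq, PowerSeries.algebraMap_apply]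
  | add p q hp hq => simp [hp, hq]
  | mul_X p i hp => fin_cases i <;> simp [hp]

open MvPolynomial in
lemma aeval_X01 {k : Type*} [CommSemiring k] (q : MvPolynomial (Fin 2) k) :
    aeval ![(X 0 : MvPolynomial (Fin 2) k), X 1] q = q := by
  have : ![(X 0 : MvPolynomial (Fin 2) k), X 1] = X := by
    funext i; fin_cases i <;> rfl
  rw [this, aeval_X_left_apply]


/-- The coefficients `uₙ, vₙ` of the unique power series solution are determined
recursively: `D₁ = Jac(F,G)` is invertible over `k[X,Y]`, and for each `n ≥ 1` there
is an expression `E` (depending only on `F` and `G`) in the earlier coefficients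
`u₀,...,uₙ₋₁, v₀,...,vₙ₋₁` such that `D₁·(uₙ,vₙ)ᵀ = E` for any solution `(𝒰,𝒱)`.
(Each coefficient automatically lies in `k[X,Y]`.) -/
theorem stmt19 (k : Type*) [Field k] [CharZero k]
    (F G : MvPolynomial (Fin 2) k)
    (hJ : ∃ c : k, c ≠ 0 ∧
      Matrix.det !![pderiv 0 F, pderiv 1 F; pderiv 0 G, pderiv 1 G] = C c) :
    IsUnit (Matrix.det !![pderiv 0 F, pderiv 1 F; pderiv 0 G, pderiv 1 G]) ∧
    ∀ n : ℕ, 1 ≤ n →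
      ∃ E : (Fin n → MvPolynomial (Fin 2) k) → (Fin n → MvPolynomial (Fin 2) k) →
          Fin 2 → MvPolynomial (Fin 2) k,
        ∀ U V : PowerSeries (MvPolynomial (Fin 2) k),
          PowerSeries.constantCoeff U = X 0 →
          PowerSeries.constantCoeff V = X 1 →
          aeval ![U, V] F =
            PowerSeries.X * PowerSeries.C (X 0) +
              (1 - PowerSeries.X) * PowerSeries.C F →
          aeval ![U, V] G =
            PowerSeries.X * PowerSeries.C (X 1) +
              (1 - PowerSeries.X) * PowerSeries.C G →
          Matrix.mulVec !![pderiv 0 F, pderiv 1 F; pderiv 0 G, pderiv 1 G]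
              ![PowerSeries.coeff n U, PowerSeries.coeff n V] =
            E (fun j => PowerSeries.coeff j U) (fun j => PowerSeries.coeff j V) := by
  constructor
  · obtain ⟨c, hc, hdet⟩ := hJ
    rw [hdet]
    exact (isUnit_iff_ne_zero.mpr hc).map (C : k →+* (MvPolynomial (Fin 2) k))
  · intro n hn
    obtain ⟨m, rfl⟩ : ∃ m, n = m + 1 := ⟨n - 1, (Nat.succ_pred_eq_of_pos hn).symm⟩
    classical
    set mkS : (Fin (m+1) → (MvPolynomial (Fin 2) k)) → PowerSeries (MvPolynomial (Fin 2) k) :=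
      fun u => PowerSeries.mk (fun j => if h : j < m + 1 then u ⟨j, h⟩ else 0) with hmkS
    refine ⟨fun u v => ![
      PowerSeries.coeff (m+1) (PowerSeries.X * PowerSeries.C (X 0) +
        (1 - PowerSeries.X) * PowerSeries.C F)
        - PowerSeries.coeff (m+1) (aeval ![mkS u, mkS v] F),
      PowerSeries.coeff (m+1) (PowerSeries.X * PowerSeries.C (X 1) +
        (1 - PowerSeries.X) * PowerSeries.C G)
        - PowerSeries.coeff (m+1) (aeval ![mkS u, mkS v] G)], ?_⟩
    intro U V hU0 hV0 hF hG
    set A := mkS (fun j => PowerSeries.coeff j U) with hA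
    set B := mkS (fun j => PowerSeries.coeff j V) with hB
    have hAc : ∀ j < m + 1, PowerSeries.coeff j U = PowerSeries.coeff j A := by
      intro j hj; simp [hA, hmkS, PowerSeries.coeff_mk, hj]; exact fun h => absurd h (by omega)
    have hBc : ∀ j < m + 1, PowerSeries.coeff j V = PowerSeries.coeff j B := by
      intro j hj; simp [hB, hmkS, PowerSeries.coeff_mk, hj]; exact fun h => absurd h (by omega)
    have hAn : PowerSeries.coeff (m+1) A = 0 := by
      simp [hA, hmkS, PowerSeries.coeff_mk]
    have hBn : PowerSeries.coeff (m+1) B = 0 := by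
      simp [hB, hmkS, PowerSeries.coeff_mk]
    have hA0 : PowerSeries.constantCoeff A = X 0 := by
      rw [← PowerSeries.coeff_zero_eq_constantCoeff_apply, ← hAc 0 (by omega),
        PowerSeries.coeff_zero_eq_constantCoeff_apply, hU0]
    have hB0 : PowerSeries.constantCoeff B = X 1 := by
      rw [← PowerSeries.coeff_zero_eq_constantCoeff_apply, ← hBc 0 (by omega),
        PowerSeries.coeff_zero_eq_constantCoeff_apply, hV0]
    have hconst : ∀ q : MvPolynomial (Fin 2) k,
        PowerSeries.constantCoeff (aeval ![A,B] q) = q := by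
      intro q; rw [const_aeval, hA0, hB0, aeval_X01]
    have eqF := (taylor_coeff m U V A B hAc hBc F).2
    have eqG := (taylor_coeff m U V A B hAc hBc G).2
    rw [hconst, hconst, hAn, hBn, sub_zero, sub_zero, hF] at eqF
    rw [hconst, hconst, hAn, hBn, sub_zero, sub_zero, hG] at eqG
    funext i
    fin_cases i <;>
      simp only [Fin.zero_eta, Fin.mk_one, Fin.isValue, Matrix.cons_val_zero,
        Matrix.cons_val_one, Matrix.head_cons, Matrix.mulVec, dotProduct,
        Fin.sum_univ_two, Matrix.cons_val', Matrix.empty_val', Matrix.cons_val_fin_one,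
        Matrix.of_apply, Matrix.vecHead, Matrix.vecTail, Function.comp_apply] <;>
      rw [← hA, ← hB] <;>
      [linear_combination -eqF; linear_combination -eqG]
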